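/- Consider the general mean-field system (λ^A, λ^B) and write ℓ̲_A = liminf_{t→∞} λ^A(t), ℓ̄_A = limsup_{t→∞} λ^A(t), ℓ̲_B = liminf_{t→∞} λ^B(t), ℓ̄_B = limsup_{t→∞} λ^B(t) (values in [0,∞]). Then: (i) if ℓ̲_A < ∞ then ℓ̲_B ≥ Φ_{A→B}(κ₄ ℓ̲_A), and if ℓ̲_A = ∞ and κ₄ > 0 then ℓ̲_B = ∞; (ii) if ℓ̄_A < ∞ and ℓ̄_B < ∞ then ℓ̄_B ≤ Φ_B(0) + ‖Φ_B‖_L κ₃ ℓ̄_B + Φ_{A→B}(κ₄ ℓ̄_A). Moreover, for the linear mean-field system: (iii) if ℓ̲_A < ∞ and ℓ̲_B < ∞ then ℓ̲_B ≥ μ_B + κ₃ ℓ̲_B + Φ_{A→B}(κ₄ ℓ̲_A); (iv) if ℓ̄_B < ∞ and ℓ̲_A < ∞ then ℓ̲_A ≥ (μ_A + κ₁ ℓ̲_A) · Φ_{B→A}(κ₂ ℓ̄_B). -/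

import Mathlib

open MeasureTheory Filter Topology Set
open scoped ENNReal

/-- Convolution term `∫₀ᵗ h(t-u) f(u) du`. -/
noncomputable def convK (h f : ℝ → ℝ) (t : ℝ) : ℝ :=
  ∫ u in (0:ℝ)..t, h (t - u) * f u

/-- `L¹` norm on `[0,∞)` of a kernel. -/
noncomputable def l1 (h : ℝ → ℝ) : ℝ :=
  ∫ s in Set.Ioi (0:ℝ), h s

/-- A nonnegative measurable kernel with finite `L¹` norm on `[0,∞)`. -/
def KernelL1 (h : ℝ → ℝ) : Prop :=
  Measurable h ∧ (∀ u, 0 ≤ u → 0 ≤ h u) ∧ IntegrableOn h (Set.Ioi 0)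

/-- A nonnegative integrable kernel vanishing at infinity. -/
def KernelOK (h : ℝ → ℝ) : Prop :=
  KernelL1 h ∧ Tendsto h atTop (𝓝 0)

/-- Properties of the inhibition kernel `Φ_{B→A}`. -/
def InhibOK (Φ : ℝ → ℝ) : Prop :=
  (∃ K, 0 ≤ K ∧ ∀ x y, 0 ≤ x → 0 ≤ y → |Φ x - Φ y| ≤ K * |x - y|) ∧
  AntitoneOn Φ (Set.Ici 0) ∧ Φ 0 = 1 ∧
  (∀ x, 0 ≤ x → 0 ≤ Φ x ∧ Φ x ≤ 1) ∧
  Tendsto Φ atTop (𝓝 0)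

/-- Properties of the feedback kernel `Φ_{A→B}`. -/
def FeedOK (Φ : ℝ → ℝ) : Prop :=
  (∃ K, 0 ≤ K ∧ ∀ x y, 0 ≤ x → 0 ≤ y → |Φ x - Φ y| ≤ K * |x - y|) ∧
  MonotoneOn Φ (Set.Ici 0) ∧ Φ 0 = 0 ∧
  (∀ x, 0 ≤ x → 0 ≤ Φ x) ∧
  Tendsto Φ atTop atTop

/-- The general mean-field system of intensities. -/
def IsGenSys (α : ℝ) (h₁ h₂ h₃ h₄ ΦA ΦB ΦBA ΦAB lA lB : ℝ → ℝ) : Prop :=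
  Continuous lA ∧ Continuous lB ∧ (∀ t, 0 ≤ lA t) ∧ (∀ t, 0 ≤ lB t) ∧
  (∀ t, 0 ≤ t →
    lA t = ΦA (α * convK h₁ lA t) * ΦBA ((1 - α) * convK h₂ lB t)) ∧
  (∀ t, 0 ≤ t →
    lB t = ΦB ((1 - α) * convK h₃ lB t) + ΦAB (α * convK h₄ lA t))

/-- The linear mean-field system: `Φ_A(x) = μ_A + x` and `Φ_B(x) = μ_B + x`. -/
def IsLinSys (α : ℝ) (h₁ h₂ h₃ h₄ ΦBA ΦAB : ℝ → ℝ) (μA μB : ℝ)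
    (lA lB : ℝ → ℝ) : Prop :=
  IsGenSys α h₁ h₂ h₃ h₄ (fun x => μA + x) (fun x => μB + x) ΦBA ΦAB lA lB

/-- `limsup_{t→∞} f(t)` with values in `[0,∞]`. -/
noncomputable def elimsup (f : ℝ → ℝ) : ℝ≥0∞ :=
  Filter.limsup (fun t => ENNReal.ofReal (f t)) Filter.atTop

/-- `liminf_{t→∞} f(t)` with values in `[0,∞]`. -/
noncomputable def eliminf (f : ℝ → ℝ) : ℝ≥0∞ :=
  Filter.liminf (fun t => ENNReal.ofReal (f t)) Filter.atTop

/-- The domain `I_{κ₁,κ₂} = {x ≥ 0 : κ₁ Φ_{B→A}(κ₂ x) < 1}`. -/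
def Idom (κ₁ κ₂ : ℝ) (ΦBA : ℝ → ℝ) : Set ℝ :=
  {x : ℝ | 0 ≤ x ∧ κ₁ * ΦBA (κ₂ * x) < 1}

/-- `Ψ₁(x) = μ_A Φ_{B→A}(κ₂x)/(1 - κ₁Φ_{B→A}(κ₂x))`. -/
noncomputable def Psi1 (μA κ₁ κ₂ : ℝ) (ΦBA : ℝ → ℝ) (x : ℝ) : ℝ :=
  μA * ΦBA (κ₂ * x) / (1 - κ₁ * ΦBA (κ₂ * x))

/-- `Ψ₂(x) = (μ_B + Φ_{A→B}(κ₄x))/(1-κ₃)`. -/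
noncomputable def Psi2 (μB κ₃ κ₄ : ℝ) (ΦAB : ℝ → ℝ) (x : ℝ) : ℝ :=
  (μB + ΦAB (κ₄ * x)) / (1 - κ₃)

/-- The fixed-point map `Φ = Ψ₂ ∘ Ψ₁`. -/
noncomputable def PhiMap (μA μB κ₁ κ₂ κ₃ κ₄ : ℝ) (ΦBA ΦAB : ℝ → ℝ) (x : ℝ) : ℝ :=
  Psi2 μB κ₃ κ₄ ΦAB (Psi1 μA κ₁ κ₂ ΦBA x)

/-- The set `U_Φ` of admissible pairs `(u,v)`. -/
def UPhi (μA μB κ₁ κ₂ κ₃ κ₄ : ℝ) (ΦBA ΦAB : ℝ → ℝ) (ℓ : ℝ) : Set (ℝ × ℝ) :=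
  {p : ℝ × ℝ | p.1 ∈ Idom κ₁ κ₂ ΦBA ∧ p.2 ∈ Idom κ₁ κ₂ ΦBA ∧
    PhiMap μA μB κ₁ κ₂ κ₃ κ₄ ΦBA ΦAB p.2 ≤ p.1 ∧ p.1 ≤ ℓ ∧ ℓ ≤ p.2 ∧
    p.2 ≤ PhiMap μA μB κ₁ κ₂ κ₃ κ₄ ΦBA ΦAB p.1 ∧ μB / (1 - κ₃) ≤ p.1}

section Helpers

lemma real_le_of_eps {a b C : ℝ} (h : ∀ e : ℝ, 0 < e → a ≤ b + C * e) : a ≤ b := by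
  refine le_of_forall_pos_le_add fun ε hε => ?_
  have he : 0 < ε / (|C| + 1) := by positivity
  refine (h _ he).trans (add_le_add_right ?_ b)
  have h1 : C * (ε / (|C| + 1)) ≤ |C| * (ε / (|C| + 1)) :=
    mul_le_mul_of_nonneg_right (le_abs_self C) he.le
  have h2 : |C| * (ε / (|C| + 1)) ≤ (|C| + 1) * (ε / (|C| + 1)) :=
    mul_le_mul_of_nonneg_right (by linarith [abs_nonneg C]) he.le
  have h3 : (|C| + 1) * (ε / (|C| + 1)) = ε := by
    field_simp
  linarith

lemma KernelL1.l1_nn {h : ℝ → ℝ} (hK : KernelL1 h) : 0 ≤ l1 h :=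
  setIntegral_nonneg measurableSet_Ioi fun x hx => hK.2.1 x (le_of_lt hx)

lemma KernelL1.ii {h : ℝ → ℝ} (hK : KernelL1 h) {a b : ℝ} (ha : 0 ≤ a) (hab : a ≤ b) :
    IntervalIntegrable h volume a b := by
  rw [intervalIntegrable_iff_integrableOn_Ioc_of_le hab]
  exact hK.2.2.mono_set fun x hx => lt_of_le_of_lt ha hx.1

lemma kernel_comp_ii {h : ℝ → ℝ} (hK : KernelL1 h) {t : ℝ} (ht : 0 ≤ t) :
    IntervalIntegrable (fun u => h (t - u)) volume 0 t := by
  have h1 : IntervalIntegrable (fun u => h (t - u)) volume (t - 0) (t - t) :=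
    (hK.ii le_rfl ht).comp_sub_left t
  simpa using h1.symm

lemma conv_ii {h f : ℝ → ℝ} (hK : KernelL1 h) (hf : Continuous f) {t : ℝ} (ht : 0 ≤ t) :
    IntervalIntegrable (fun u => h (t - u) * f u) volume 0 t :=
  (kernel_comp_ii hK ht).mul_continuousOn hf.continuousOn

lemma convK_nn {h f : ℝ → ℝ} (hK : KernelL1 h) (hf0 : ∀ u, 0 ≤ f u) {t : ℝ} (ht : 0 ≤ t) :
    0 ≤ convK h f t :=
  intervalIntegral.integral_nonneg ht fun u hu =>
    mul_nonneg (hK.2.1 _ (sub_nonneg.2 hu.2)) (hf0 u)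

lemma int0x_nn {h : ℝ → ℝ} (hK : KernelL1 h) {x : ℝ} (hx : 0 ≤ x) :
    0 ≤ ∫ s in (0:ℝ)..x, h s :=
  intervalIntegral.integral_nonneg hx fun u hu => hK.2.1 u hu.1

lemma int0x_le_l1 {h : ℝ → ℝ} (hK : KernelL1 h) {x : ℝ} (hx : 0 ≤ x) :
    (∫ s in (0:ℝ)..x, h s) ≤ l1 h := by
  rw [intervalIntegral.integral_of_le hx, l1]
  apply setIntegral_mono_set hK.2.2
  · exact (ae_restrict_iff' measurableSet_Ioi).2 (ae_of_all _ fun u hu => hK.2.1 u hu.le)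
  · exact HasSubset.Subset.eventuallyLE Set.Ioc_subset_Ioi_self

lemma tendsto_int0x {h : ℝ → ℝ} (hK : KernelL1 h) :
    Tendsto (fun x => ∫ s in (0:ℝ)..x, h s) atTop (𝓝 (l1 h)) :=
  intervalIntegral_tendsto_integral_Ioi 0 hK.2.2 tendsto_id

lemma tendsto_int0x_shift {h : ℝ → ℝ} (hK : KernelL1 h) (T : ℝ) :
    Tendsto (fun t => ∫ s in (0:ℝ)..(t - T), h s) atTop (𝓝 (l1 h)) := by
  have hshift : Tendsto (fun t : ℝ => t - T) atTop atTop :=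
    (tendsto_atTop_add_const_right atTop (-T) tendsto_id).congr
      fun x => (sub_eq_add_neg x T).symm
  exact (tendsto_int0x hK).comp hshift

lemma tendsto_tail {h : ℝ → ℝ} (hK : KernelL1 h) {T : ℝ} (hT : 0 ≤ T) :
    Tendsto (fun t => ∫ s in (t - T)..t, h s) atTop (𝓝 0) := by
  have h3 : Tendsto (fun t => (∫ s in (0:ℝ)..t, h s) - ∫ s in (0:ℝ)..(t - T), h s)
      atTop (𝓝 0) := by
    simpa using (tendsto_int0x hK).sub (tendsto_int0x_shift hK T)
  refine h3.congr' ?_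
  filter_upwards [eventually_ge_atTop T] with t ht
  have h0t : (0:ℝ) ≤ t - T := by linarith
  have hi1 : IntervalIntegrable h volume 0 (t - T) := hK.ii le_rfl h0t
  have hi2 : IntervalIntegrable h volume (t - T) t := hK.ii h0t (by linarith)
  rw [← intervalIntegral.integral_add_adjacent_intervals hi1 hi2]
  ring

end Helpers
section Helpers2

lemma conv_lower {h f : ℝ → ℝ} (hK : KernelL1 h) (hf : Continuous f)
    (hf0 : ∀ u, 0 ≤ f u) {c T : ℝ} (hc : 0 ≤ c) (hT : 0 ≤ T)
    (hcf : ∀ u, T ≤ u → c ≤ f u) {t : ℝ} (ht : T ≤ t) :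
    c * ∫ s in (0:ℝ)..(t - T), h s ≤ convK h f t := by
  have ht0 : 0 ≤ t := hT.trans ht
  have hii := conv_ii hK hf ht0
  have hsub : Set.uIcc T t ⊆ Set.uIcc 0 t := by
    rw [Set.uIcc_of_le ht, Set.uIcc_of_le ht0]
    exact Set.Icc_subset_Icc hT le_rfl
  have hsub' : Set.uIcc 0 T ⊆ Set.uIcc 0 t := by
    rw [Set.uIcc_of_le hT, Set.uIcc_of_le ht0]
    exact Set.Icc_subset_Icc le_rfl ht
  have hi2 : IntervalIntegrable (fun u => h (t - u) * f u) volume T t := hii.mono_set hsub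
  have hi1 : IntervalIntegrable (fun u => h (t - u) * f u) volume 0 T := hii.mono_set hsub'
  have hic : IntervalIntegrable (fun u => h (t - u) * c) volume T t :=
    ((kernel_comp_ii hK ht0).mono_set hsub).mul_const c
  have key : (∫ u in T..t, h (t - u) * c) ≤ ∫ u in T..t, h (t - u) * f u := by
    apply intervalIntegral.integral_mono_on ht hic hi2
    intro u hu
    exact mul_le_mul_of_nonneg_left (hcf u hu.1) (hK.2.1 _ (sub_nonneg.2 hu.2))
  have heval : (∫ u in T..t, h (t - u) * c) = c * ∫ s in (0:ℝ)..(t - T), h s := by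
    rw [intervalIntegral.integral_mul_const, intervalIntegral.integral_comp_sub_left h t,
      sub_self, mul_comm]
  have h0 : 0 ≤ ∫ u in (0:ℝ)..T, h (t - u) * f u :=
    intervalIntegral.integral_nonneg hT fun u hu =>
      mul_nonneg (hK.2.1 _ (by have := hu.2; simp only [sub_nonneg]; linarith)) (hf0 u)
  calc c * ∫ s in (0:ℝ)..(t - T), h s = ∫ u in T..t, h (t - u) * c := heval.symm
    _ ≤ ∫ u in T..t, h (t - u) * f u := key
    _ ≤ convK h f t := by
        rw [convK, ← intervalIntegral.integral_add_adjacent_intervals hi1 hi2]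
        linarith

lemma conv_upper {h f : ℝ → ℝ} (hK : KernelL1 h) (hf : Continuous f) (hf0 : ∀ u, 0 ≤ f u)
    {c T M : ℝ} (hc : 0 ≤ c) (hT : 0 ≤ T) (hM : ∀ u, u ∈ Set.Icc 0 T → f u ≤ M)
    (hcf : ∀ u, T ≤ u → f u ≤ c) {t : ℝ} (ht : T ≤ t) :
    convK h f t ≤ M * (∫ s in (t - T)..t, h s) + c * l1 h := by
  have ht0 : 0 ≤ t := hT.trans ht
  have hii := conv_ii hK hf ht0
  have hsub : Set.uIcc T t ⊆ Set.uIcc 0 t := by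
    rw [Set.uIcc_of_le ht, Set.uIcc_of_le ht0]
    exact Set.Icc_subset_Icc hT le_rfl
  have hsub' : Set.uIcc 0 T ⊆ Set.uIcc 0 t := by
    rw [Set.uIcc_of_le hT, Set.uIcc_of_le ht0]
    exact Set.Icc_subset_Icc le_rfl ht
  have hi2 : IntervalIntegrable (fun u => h (t - u) * f u) volume T t := hii.mono_set hsub
  have hi1 : IntervalIntegrable (fun u => h (t - u) * f u) volume 0 T := hii.mono_set hsub'
  have hicM : IntervalIntegrable (fun u => h (t - u) * M) volume 0 T :=
    ((kernel_comp_ii hK ht0).mono_set hsub').mul_const M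
  have hicc : IntervalIntegrable (fun u => h (t - u) * c) volume T t :=
    ((kernel_comp_ii hK ht0).mono_set hsub).mul_const c
  have key1 : (∫ u in (0:ℝ)..T, h (t - u) * f u) ≤ ∫ u in (0:ℝ)..T, h (t - u) * M := by
    apply intervalIntegral.integral_mono_on hT hi1 hicM
    intro u hu
    exact mul_le_mul_of_nonneg_left (hM u hu)
      (hK.2.1 _ (by have := hu.2; simp only [sub_nonneg]; linarith))
  have heval1 : (∫ u in (0:ℝ)..T, h (t - u) * M) = M * ∫ s in (t - T)..t, h s := by
    rw [intervalIntegral.integral_mul_const, intervalIntegral.integral_comp_sub_left h t,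
      sub_zero, mul_comm]
  have key2 : (∫ u in T..t, h (t - u) * f u) ≤ ∫ u in T..t, h (t - u) * c := by
    apply intervalIntegral.integral_mono_on ht hi2 hicc
    intro u hu
    exact mul_le_mul_of_nonneg_left (hcf u hu.1) (hK.2.1 _ (sub_nonneg.2 hu.2))
  have heval2 : (∫ u in T..t, h (t - u) * c) = c * ∫ s in (0:ℝ)..(t - T), h s := by
    rw [intervalIntegral.integral_mul_const, intervalIntegral.integral_comp_sub_left h t,
      sub_self, mul_comm]
  have hl1 : c * (∫ s in (0:ℝ)..(t - T), h s) ≤ c * l1 h :=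
    mul_le_mul_of_nonneg_left (int0x_le_l1 hK (by linarith)) hc
  rw [convK, ← intervalIntegral.integral_add_adjacent_intervals hi1 hi2]
  linarith

lemma conv_liminf_ge_ev {h f : ℝ → ℝ} (hK : KernelL1 h) (hf : Continuous f)
    (hf0 : ∀ u, 0 ≤ f u) {c ε : ℝ} (hc : 0 ≤ c) (hε : 0 < ε)
    (hev : ∀ᶠ u in atTop, c ≤ f u) :
    ∀ᶠ t in atTop, c * l1 h - ε ≤ convK h f t := by
  obtain ⟨T₀, hT₀⟩ := eventually_atTop.1 hev
  set T := max T₀ 0 with hTdef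
  have hT : 0 ≤ T := le_max_right _ _
  have hcf : ∀ u, T ≤ u → c ≤ f u := fun u hu => hT₀ u ((le_max_left _ _).trans hu)
  have hδ : 0 < ε / (c + 1) := by positivity
  have hint : ∀ᶠ t in atTop, l1 h - ε / (c + 1) ≤ ∫ s in (0:ℝ)..(t - T), h s :=
    (tendsto_int0x_shift hK T).eventually (eventually_ge_nhds (by linarith))
  filter_upwards [hint, eventually_ge_atTop T] with t hint ht
  have h1 : c * (l1 h - ε / (c + 1)) ≤ c * ∫ s in (0:ℝ)..(t - T), h s :=
    mul_le_mul_of_nonneg_left hint hc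
  have h2 := conv_lower hK hf hf0 hc hT hcf ht
  have h3 : c * (ε / (c + 1)) ≤ ε := by
    rw [← mul_div_assoc, div_le_iff₀ (by positivity : (0:ℝ) < c + 1)]
    nlinarith
  nlinarith [mul_le_mul_of_nonneg_left hint hc]

lemma conv_limsup_le_ev {h f : ℝ → ℝ} (hK : KernelL1 h) (hf : Continuous f)
    (hf0 : ∀ u, 0 ≤ f u) {c ε : ℝ} (hc : 0 ≤ c) (hε : 0 < ε)
    (hev : ∀ᶠ u in atTop, f u ≤ c) :
    ∀ᶠ t in atTop, convK h f t ≤ c * l1 h + ε := by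
  obtain ⟨T₀, hT₀⟩ := eventually_atTop.1 hev
  set T := max T₀ 0 with hTdef
  have hT : 0 ≤ T := le_max_right _ _
  have hcf : ∀ u, T ≤ u → f u ≤ c := fun u hu => hT₀ u ((le_max_left _ _).trans hu)
  obtain ⟨C, hC⟩ := isCompact_Icc.exists_bound_of_continuousOn
    (hf.continuousOn : ContinuousOn f (Set.Icc 0 T))
  set M := max C 0 with hMdef
  have hM0 : 0 ≤ M := le_max_right _ _
  have hM : ∀ u, u ∈ Set.Icc (0:ℝ) T → f u ≤ M := fun u hu =>
    (le_abs_self _).trans ((hC u hu).trans (le_max_left _ _))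
  have htail : ∀ᶠ t in atTop, M * (∫ s in (t - T)..t, h s) ≤ ε := by
    have h4 : Tendsto (fun t => M * ∫ s in (t - T)..t, h s) atTop (𝓝 0) := by
      simpa using (tendsto_tail hK hT).const_mul M
    exact h4.eventually (eventually_le_nhds hε)
  filter_upwards [htail, eventually_ge_atTop T] with t htail ht
  have := conv_upper hK hf hf0 hc hT hM hcf ht
  linarith

end Helpers2
section Helpers3

lemma eliminf_lb_ev {f : ℝ → ℝ} {c : ℝ} (h : ∀ᶠ t in atTop, c ≤ f t) :
    ENNReal.ofReal c ≤ eliminf f := by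
  unfold eliminf
  exact le_liminf_of_le (by isBoundedDefault)
    (h.mono fun t ht => ENNReal.ofReal_le_ofReal ht)

lemma elimsup_ub_ev {f : ℝ → ℝ} {c : ℝ} (h : ∀ᶠ t in atTop, f t ≤ c) :
    elimsup f ≤ ENNReal.ofReal c := by
  unfold elimsup
  exact limsup_le_of_le (by isBoundedDefault)
    (h.mono fun t ht => ENNReal.ofReal_le_ofReal ht)

lemma ev_ge_of_eliminf {f : ℝ → ℝ} (hf0 : ∀ t, 0 ≤ f t) (hfin : eliminf f < ⊤)
    {ε : ℝ} (hε : 0 < ε) : ∀ᶠ t in atTop, (eliminf f).toReal - ε ≤ f t := by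
  set L := (eliminf f).toReal with hL
  rcases le_or_gt (L - ε) 0 with h | h
  · exact Eventually.of_forall fun t => h.trans (hf0 t)
  · have h1 : ENNReal.ofReal (L - ε) < eliminf f := by
      rw [← ENNReal.ofReal_toReal hfin.ne, ← hL]
      exact (ENNReal.ofReal_lt_ofReal_iff_of_nonneg h.le).2 (by linarith)
    unfold eliminf at h1
    exact (eventually_lt_of_lt_liminf h1).mono fun t ht =>
      ((ENNReal.ofReal_lt_ofReal_iff_of_nonneg h.le).1 ht).le

lemma ev_ge_of_eliminf_top {f : ℝ → ℝ} (h : eliminf f = ⊤) {c : ℝ} (hc : 0 ≤ c) :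
    ∀ᶠ t in atTop, c ≤ f t := by
  have h1 : ENNReal.ofReal c < eliminf f := by rw [h]; exact ENNReal.ofReal_lt_top
  unfold eliminf at h1
  refine (eventually_lt_of_lt_liminf h1).mono fun t ht => ?_
  by_contra hlt
  push_neg at hlt
  exact absurd (lt_of_lt_of_le ht (ENNReal.ofReal_le_ofReal hlt.le)) (lt_irrefl _)

lemma ev_le_of_elimsup {f : ℝ → ℝ} (hfin : elimsup f < ⊤) {ε : ℝ} (hε : 0 < ε) :
    ∀ᶠ t in atTop, f t ≤ (elimsup f).toReal + ε := by
  set L := (elimsup f).toReal with hL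
  have hL0 : 0 ≤ L := ENNReal.toReal_nonneg
  have h1 : elimsup f < ENNReal.ofReal (L + ε) := by
    calc elimsup f = ENNReal.ofReal L := (ENNReal.ofReal_toReal hfin.ne).symm
      _ < ENNReal.ofReal (L + ε) :=
        (ENNReal.ofReal_lt_ofReal_iff_of_nonneg hL0).2 (by linarith)
  unfold elimsup at h1
  refine (eventually_lt_of_limsup_lt h1).mono fun t ht => ?_
  rcases le_or_gt (f t) 0 with h2 | h2
  · linarith
  · exact ((ENNReal.ofReal_lt_ofReal_iff_of_nonneg h2.le).1 ht).le

lemma eq_top_of_forall_ofReal_le {x : ℝ≥0∞} (h : ∀ c : ℝ, ENNReal.ofReal c ≤ x) : x = ⊤ := by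
  by_contra hx
  have h1 : ENNReal.ofReal (x.toReal + 1) ≤ ENNReal.ofReal x.toReal := by
    rw [ENNReal.ofReal_toReal hx]; exact h _
  have := (ENNReal.ofReal_le_ofReal_iff ENNReal.toReal_nonneg).1 h1
  linarith

lemma lip_lb_mono {Φ : ℝ → ℝ} {K x y e : ℝ}
    (hlip : ∀ a b, 0 ≤ a → 0 ≤ b → |Φ a - Φ b| ≤ K * |a - b|)
    (hK0 : 0 ≤ K) (hmono : MonotoneOn Φ (Set.Ici 0))
    (hx : 0 ≤ x) (hy : 0 ≤ y) (he : 0 ≤ e) (hxy : x - e ≤ y) :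
    Φ x - K * e ≤ Φ y := by
  rcases le_or_gt x y with h | h
  · have := hmono hx hy h
    nlinarith
  · have h1 := (abs_le.1 (hlip x y hx hy)).2
    have h2 : |x - y| ≤ e := by rw [abs_of_nonneg (by linarith)]; linarith
    nlinarith

lemma lip_ub_mono {Φ : ℝ → ℝ} {K x y e : ℝ}
    (hlip : ∀ a b, 0 ≤ a → 0 ≤ b → |Φ a - Φ b| ≤ K * |a - b|)
    (hK0 : 0 ≤ K) (hmono : MonotoneOn Φ (Set.Ici 0))
    (hx : 0 ≤ x) (hy : 0 ≤ y) (he : 0 ≤ e) (hxy : y ≤ x + e) :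
    Φ y ≤ Φ x + K * e := by
  rcases le_or_gt y x with h | h
  · have := hmono hy hx h
    nlinarith
  · have h1 := (abs_le.1 (hlip y x hy hx)).2
    have h2 : |y - x| ≤ e := by rw [abs_of_nonneg (by linarith)]; linarith
    nlinarith

lemma lip_lb_anti {Φ : ℝ → ℝ} {K x y e : ℝ}
    (hlip : ∀ a b, 0 ≤ a → 0 ≤ b → |Φ a - Φ b| ≤ K * |a - b|)
    (hK0 : 0 ≤ K) (hanti : AntitoneOn Φ (Set.Ici 0))
    (hx : 0 ≤ x) (hy : 0 ≤ y) (he : 0 ≤ e) (hxy : y ≤ x + e) :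
    Φ x - K * e ≤ Φ y := by
  rcases le_or_gt y x with h | h
  · have := hanti hy hx h
    nlinarith
  · have h1 := (abs_le.1 (hlip x y hx hy)).2
    have h2 : |x - y| ≤ e := by rw [abs_of_nonpos (by linarith)]; linarith
    nlinarith

end Helpers3

set_option maxHeartbeats 1600000 in
/-- A priori inequalities on the liminf/limsup of the intensities, for the
general and the linear mean-field systems. -/
theorem stmt12
    (α : ℝ) (hα : α ∈ Set.Ioo (0:ℝ) 1)
    (h₁ h₂ h₃ h₄ : ℝ → ℝ)
    (hh₁ : KernelOK h₁) (hh₂ : KernelOK h₂) (hh₃ : KernelOK h₃) (hh₄ : KernelOK h₄)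
    (κ₁ κ₂ κ₃ κ₄ : ℝ)
    (hκ₁ : κ₁ = α * l1 h₁) (hκ₂ : κ₂ = (1 - α) * l1 h₂)
    (hκ₃ : κ₃ = (1 - α) * l1 h₃) (hκ₄ : κ₄ = α * l1 h₄)
    (ΦBA ΦAB : ℝ → ℝ) (hBA : InhibOK ΦBA) (hAB : FeedOK ΦAB)
    (ΦA ΦB : ℝ → ℝ) (LA LB : ℝ) (hLA : 0 ≤ LA) (hLB : 0 ≤ LB)
    (hΦApos : ∀ x, 0 ≤ x → 0 ≤ ΦA x) (hΦBpos : ∀ x, 0 ≤ x → 0 ≤ ΦB x)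
    (hΦAlip : ∀ x y, 0 ≤ x → 0 ≤ y → |ΦA x - ΦA y| ≤ LA * |x - y|)
    (hΦBlip : ∀ x y, 0 ≤ x → 0 ≤ y → |ΦB x - ΦB y| ≤ LB * |x - y|)
    (μA μB : ℝ) (hμA : 0 ≤ μA) (hμB : 0 ≤ μB) :
    (∀ lA lB, IsGenSys α h₁ h₂ h₃ h₄ ΦA ΦB ΦBA ΦAB lA lB →
      (eliminf lA < ⊤ →
        ENNReal.ofReal (ΦAB (κ₄ * (eliminf lA).toReal)) ≤ eliminf lB) ∧
      (eliminf lA = ⊤ → 0 < κ₄ → eliminf lB = ⊤) ∧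
      (elimsup lA < ⊤ → elimsup lB < ⊤ →
        (elimsup lB).toReal ≤
          ΦB 0 + LB * κ₃ * (elimsup lB).toReal +
            ΦAB (κ₄ * (elimsup lA).toReal))) ∧
    (∀ lA lB, IsLinSys α h₁ h₂ h₃ h₄ ΦBA ΦAB μA μB lA lB →
      (eliminf lA < ⊤ → eliminf lB < ⊤ →
        μB + κ₃ * (eliminf lB).toReal + ΦAB (κ₄ * (eliminf lA).toReal) ≤
          (eliminf lB).toReal) ∧
      (elimsup lB < ⊤ → eliminf lA < ⊤ →
        (μA + κ₁ * (eliminf lA).toReal) * ΦBA (κ₂ * (elimsup lB).toReal) ≤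
          (eliminf lA).toReal)) := by
  obtain ⟨hα0, hα1⟩ := hα
  subst hκ₁; subst hκ₂; subst hκ₃; subst hκ₄
  obtain ⟨⟨KAB, hKAB0, hKABlip⟩, hABmono, hAB00, hABpos, hABtop⟩ := hAB
  obtain ⟨⟨KBA, hKBA0, hKBAlip⟩, hBAanti, hBA1, hBAbd, hBAtend⟩ := hBA
  have h1α : (0:ℝ) < 1 - α := by linarith
  have hl1 : 0 ≤ l1 h₁ := hh₁.1.l1_nn
  have hl2 : 0 ≤ l1 h₂ := hh₂.1.l1_nn
  have hl3 : 0 ≤ l1 h₃ := hh₃.1.l1_nn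
  have hl4 : 0 ≤ l1 h₄ := hh₄.1.l1_nn
  have hκ10 : 0 ≤ α * l1 h₁ := mul_nonneg hα0.le hl1
  have hκ20 : 0 ≤ (1 - α) * l1 h₂ := mul_nonneg h1α.le hl2
  have hκ30 : 0 ≤ (1 - α) * l1 h₃ := mul_nonneg h1α.le hl3
  have hκ40 : 0 ≤ α * l1 h₄ := mul_nonneg hα0.le hl4
  constructor
  · intro lA lB hsys
    obtain ⟨hcA, hcB, hA0, hB0, heqA, heqB⟩ := hsys
    refine ⟨?_, ?_, ?_⟩
    · -- claim (i)
      intro hfinA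
      set a := (eliminf lA).toReal with ha
      have ha0 : 0 ≤ a := ENNReal.toReal_nonneg
      rcases eq_or_ne (eliminf lB) ⊤ with hB | hB
      · rw [hB]; exact le_top
      have key : ΦAB (α * l1 h₄ * a) ≤ (eliminf lB).toReal := by
        apply real_le_of_eps (C := KAB * (α * l1 h₄ + 1))
        intro e he
        have hevA : ∀ᶠ u in atTop, max (a - e) 0 ≤ lA u :=
          (ev_ge_of_eliminf hA0 hfinA he).mono fun u hu => max_le hu (hA0 u)
        have hev2 := conv_liminf_ge_ev hh₄.1 hcA hA0 (le_max_right (a - e) 0) he hevA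
        have hfinal : ∀ᶠ t in atTop,
            ΦAB (α * l1 h₄ * a) - KAB * (α * l1 h₄ + 1) * e ≤ lB t := by
          filter_upwards [hev2, eventually_ge_atTop (0:ℝ)] with t hconv ht0
          have hc4 : 0 ≤ convK h₄ lA t := convK_nn hh₄.1 hA0 ht0
          have harg : α * l1 h₄ * a - (α * l1 h₄ + 1) * e ≤ α * convK h₄ lA t := by
            have h1 : α * (max (a - e) 0 * l1 h₄ - e) ≤ α * convK h₄ lA t :=
              mul_le_mul_of_nonneg_left hconv hα0.le
            have h2 : α * l1 h₄ * (a - e) ≤ α * l1 h₄ * max (a - e) 0 :=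
              mul_le_mul_of_nonneg_left (le_max_left _ _) hκ40
            have h3 : α * e ≤ e := by linarith [mul_nonneg h1α.le he.le]
            linarith
          have hΦ : ΦAB (α * l1 h₄ * a) - KAB * ((α * l1 h₄ + 1) * e) ≤
              ΦAB (α * convK h₄ lA t) :=
            lip_lb_mono hKABlip hKAB0 hABmono (mul_nonneg hκ40 ha0)
              (mul_nonneg hα0.le hc4) (mul_nonneg (by linarith) he.le) harg
          have hΦB0 : 0 ≤ ΦB ((1 - α) * convK h₃ lB t) :=
            hΦBpos _ (mul_nonneg h1α.le (convK_nn hh₃.1 hB0 ht0))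
          rw [heqB t ht0]
          linarith
        have h5 := eliminf_lb_ev hfinal
        rw [← ENNReal.ofReal_toReal hB] at h5
        have h6 := (ENNReal.ofReal_le_ofReal_iff ENNReal.toReal_nonneg).1 h5
        linarith
      calc ENNReal.ofReal (ΦAB (α * l1 h₄ * a))
          ≤ ENNReal.ofReal (eliminf lB).toReal := ENNReal.ofReal_le_ofReal key
        _ = eliminf lB := ENNReal.ofReal_toReal hB
    · -- claim (ii)
      intro htop hκ4
      apply eq_top_of_forall_ofReal_le
      intro c
      rcases le_or_gt c 0 with hc | hc
      · calc ENNReal.ofReal c = 0 := by simp [ENNReal.ofReal_eq_zero.2 hc]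
          _ ≤ eliminf lB := zero_le
      · apply eliminf_lb_ev
        obtain ⟨X, hX⟩ := eventually_atTop.1 (hABtop.eventually_ge_atTop c)
        set c₀ := (max X 0 + 1) / (α * l1 h₄) with hc₀
        have hc₀0 : 0 ≤ c₀ := div_nonneg (by positivity) hκ40
        have hevA := ev_ge_of_eliminf_top htop hc₀0
        have hconv := conv_liminf_ge_ev hh₄.1 hcA hA0 hc₀0 one_pos hevA
        filter_upwards [hconv, eventually_ge_atTop (0:ℝ)] with t hconv ht0
        have harg : X ≤ α * convK h₄ lA t := by
          have h1 : α * (c₀ * l1 h₄ - 1) ≤ α * convK h₄ lA t :=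
            mul_le_mul_of_nonneg_left hconv hα0.le
          have h2 : c₀ * (α * l1 h₄) = max X 0 + 1 := div_mul_cancel₀ _ (ne_of_gt hκ4)
          have h3 : X ≤ max X 0 := le_max_left _ _
          nlinarith
        have hΦ : c ≤ ΦAB (α * convK h₄ lA t) := hX _ harg
        have hΦB0 : 0 ≤ ΦB ((1 - α) * convK h₃ lB t) :=
          hΦBpos _ (mul_nonneg h1α.le (convK_nn hh₃.1 hB0 ht0))
        rw [heqB t ht0]
        linarith
    · -- claim (iii)
      intro hfinA hfinB
      set a := (elimsup lA).toReal with ha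
      set b := (elimsup lB).toReal with hb
      have ha0 : 0 ≤ a := ENNReal.toReal_nonneg
      have hb0 : 0 ≤ b := ENNReal.toReal_nonneg
      apply real_le_of_eps (C := LB * ((1 - α) * l1 h₃ + 1) + KAB * (α * l1 h₄ + 1))
      intro e he
      have hevA := ev_le_of_elimsup hfinA he
      have hevB := ev_le_of_elimsup hfinB he
      have hconv3 := conv_limsup_le_ev hh₃.1 hcB hB0 (by linarith : (0:ℝ) ≤ b + e) he hevB
      have hconv4 := conv_limsup_le_ev hh₄.1 hcA hA0 (by linarith : (0:ℝ) ≤ a + e) he hevA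
      have hfinal : ∀ᶠ t in atTop, lB t ≤
          ΦB 0 + LB * ((1 - α) * l1 h₃) * b + ΦAB (α * l1 h₄ * a)
            + (LB * ((1 - α) * l1 h₃ + 1) + KAB * (α * l1 h₄ + 1)) * e := by
        filter_upwards [hconv3, hconv4, eventually_ge_atTop (0:ℝ)] with t hc3 hc4 ht0
        have hx3 : 0 ≤ (1 - α) * convK h₃ lB t :=
          mul_nonneg h1α.le (convK_nn hh₃.1 hB0 ht0)
        have hx4 : 0 ≤ α * convK h₄ lA t :=
          mul_nonneg hα0.le (convK_nn hh₄.1 hA0 ht0)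
        have hb3 : (1 - α) * convK h₃ lB t ≤
            (1 - α) * l1 h₃ * b + ((1 - α) * l1 h₃ + 1) * e := by
          have h1 : (1 - α) * convK h₃ lB t ≤ (1 - α) * ((b + e) * l1 h₃ + e) :=
            mul_le_mul_of_nonneg_left hc3 h1α.le
          nlinarith
        have hb4 : α * convK h₄ lA t ≤ α * l1 h₄ * a + (α * l1 h₄ + 1) * e := by
          have h1 : α * convK h₄ lA t ≤ α * ((a + e) * l1 h₄ + e) :=
            mul_le_mul_of_nonneg_left hc4 hα0.le
          nlinarith
        have hΦB : ΦB ((1 - α) * convK h₃ lB t) ≤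
            ΦB 0 + LB * ((1 - α) * convK h₃ lB t) := by
          have h1 := (abs_le.1 (hΦBlip _ 0 hx3 le_rfl)).2
          rw [sub_zero, abs_of_nonneg hx3] at h1
          linarith
        have hΦAB : ΦAB (α * convK h₄ lA t) ≤
            ΦAB (α * l1 h₄ * a) + KAB * ((α * l1 h₄ + 1) * e) :=
          lip_ub_mono hKABlip hKAB0 hABmono (mul_nonneg hκ40 ha0) hx4
            (mul_nonneg (by linarith) he.le) hb4
        have hLBx : LB * ((1 - α) * convK h₃ lB t) ≤
            LB * ((1 - α) * l1 h₃ * b + ((1 - α) * l1 h₃ + 1) * e) :=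
          mul_le_mul_of_nonneg_left hb3 hLB
        rw [heqB t ht0]
        linarith
      have h5 := elimsup_ub_ev hfinal
      have hR0 : 0 ≤ ΦB 0 + LB * ((1 - α) * l1 h₃) * b + ΦAB (α * l1 h₄ * a)
          + (LB * ((1 - α) * l1 h₃ + 1) + KAB * (α * l1 h₄ + 1)) * e := by
        have p1 := hΦBpos 0 le_rfl
        have p2 := hABpos _ (mul_nonneg hκ40 ha0)
        have p3 : 0 ≤ (LB * ((1 - α) * l1 h₃ + 1) + KAB * (α * l1 h₄ + 1)) * e := by
          apply mul_nonneg _ he.le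
          have := mul_nonneg hLB (by linarith : (0:ℝ) ≤ (1 - α) * l1 h₃ + 1)
          have := mul_nonneg hKAB0 (by linarith : (0:ℝ) ≤ α * l1 h₄ + 1)
          linarith
        linarith [mul_nonneg (mul_nonneg hLB hκ30) hb0]
      have h6 := ENNReal.toReal_le_of_le_ofReal hR0 h5
      rw [← hb] at h6
      linarith
  · intro lA lB hsys
    obtain ⟨hcA, hcB, hA0, hB0, heqA, heqB⟩ := hsys
    refine ⟨?_, ?_⟩
    · -- claim (iv)
      intro hfinA hfinB
      set a := (eliminf lA).toReal with ha
      set b := (eliminf lB).toReal with hb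
      have ha0 : 0 ≤ a := ENNReal.toReal_nonneg
      have hb0 : 0 ≤ b := ENNReal.toReal_nonneg
      apply real_le_of_eps (C := ((1 - α) * l1 h₃ + 1) + KAB * (α * l1 h₄ + 1))
      intro e he
      have hevA : ∀ᶠ u in atTop, max (a - e) 0 ≤ lA u :=
        (ev_ge_of_eliminf hA0 hfinA he).mono fun u hu => max_le hu (hA0 u)
      have hevB : ∀ᶠ u in atTop, max (b - e) 0 ≤ lB u :=
        (ev_ge_of_eliminf hB0 hfinB he).mono fun u hu => max_le hu (hB0 u)
      have hconv4 := conv_liminf_ge_ev hh₄.1 hcA hA0 (le_max_right (a - e) 0) he hevA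
      have hconv3 := conv_liminf_ge_ev hh₃.1 hcB hB0 (le_max_right (b - e) 0) he hevB
      have hfinal : ∀ᶠ t in atTop,
          μB + (1 - α) * l1 h₃ * b + ΦAB (α * l1 h₄ * a)
            - (((1 - α) * l1 h₃ + 1) + KAB * (α * l1 h₄ + 1)) * e ≤ lB t := by
        filter_upwards [hconv3, hconv4, eventually_ge_atTop (0:ℝ)] with t hc3 hc4 ht0
        have hlow3 : (1 - α) * l1 h₃ * b - ((1 - α) * l1 h₃ + 1) * e ≤
            (1 - α) * convK h₃ lB t := by
          have h1 : (1 - α) * (max (b - e) 0 * l1 h₃ - e) ≤ (1 - α) * convK h₃ lB t :=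
            mul_le_mul_of_nonneg_left hc3 h1α.le
          have h2 : (1 - α) * l1 h₃ * (b - e) ≤ (1 - α) * l1 h₃ * max (b - e) 0 :=
            mul_le_mul_of_nonneg_left (le_max_left _ _) hκ30
          have h3 : (1 - α) * e ≤ e := by linarith [mul_nonneg hα0.le he.le]
          linarith
        have hlow4 : α * l1 h₄ * a - (α * l1 h₄ + 1) * e ≤ α * convK h₄ lA t := by
          have h1 : α * (max (a - e) 0 * l1 h₄ - e) ≤ α * convK h₄ lA t :=
            mul_le_mul_of_nonneg_left hc4 hα0.le
          have h2 : α * l1 h₄ * (a - e) ≤ α * l1 h₄ * max (a - e) 0 :=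
            mul_le_mul_of_nonneg_left (le_max_left _ _) hκ40
          have h3 : α * e ≤ e := by linarith [mul_nonneg h1α.le he.le]
          linarith
        have hc4' : 0 ≤ convK h₄ lA t := convK_nn hh₄.1 hA0 ht0
        have hΦ : ΦAB (α * l1 h₄ * a) - KAB * ((α * l1 h₄ + 1) * e) ≤
            ΦAB (α * convK h₄ lA t) :=
          lip_lb_mono hKABlip hKAB0 hABmono (mul_nonneg hκ40 ha0)
            (mul_nonneg hα0.le hc4') (mul_nonneg (by linarith) he.le) hlow4
        have heq := heqB t ht0
        simp only at heq
        rw [heq]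
        linarith
      have h5 := eliminf_lb_ev hfinal
      rw [← ENNReal.ofReal_toReal hfinB.ne] at h5
      have h6 := (ENNReal.ofReal_le_ofReal_iff ENNReal.toReal_nonneg).1 h5
      rw [← hb] at h6
      linarith
    · -- claim (v)
      intro hfinB hfinA
      set a := (eliminf lA).toReal with ha
      set b := (elimsup lB).toReal with hb
      have ha0 : 0 ≤ a := ENNReal.toReal_nonneg
      have hb0 : 0 ≤ b := ENNReal.toReal_nonneg
      set X := μA + α * l1 h₁ * a with hX
      set Y := ΦBA ((1 - α) * l1 h₂ * b) with hY
      have hX0 : 0 ≤ X := by rw [hX]; positivity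
      have hY01 := hBAbd _ (mul_nonneg hκ20 hb0)
      set C1 := α * l1 h₁ + 1 with hC1
      set C2 := KBA * ((1 - α) * l1 h₂ + 1) with hC2
      have hC10 : 0 < C1 := by rw [hC1]; linarith
      have hC20 : 0 ≤ C2 := by rw [hC2]; exact mul_nonneg hKBA0 (by linarith)
      apply real_le_of_eps (C := X * C2 + C1)
      intro e he
      have hevA : ∀ᶠ u in atTop, max (a - e) 0 ≤ lA u :=
        (ev_ge_of_eliminf hA0 hfinA he).mono fun u hu => max_le hu (hA0 u)
      have hevB := ev_le_of_elimsup hfinB he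
      have hconv1 := conv_liminf_ge_ev hh₁.1 hcA hA0 (le_max_right (a - e) 0) he hevA
      have hconv2 := conv_limsup_le_ev hh₂.1 hcB hB0 (by linarith : (0:ℝ) ≤ b + e) he hevB
      have hfinal : ∀ᶠ t in atTop, max (X - C1 * e) 0 * max (Y - C2 * e) 0 ≤ lA t := by
        filter_upwards [hconv1, hconv2, eventually_ge_atTop (0:ℝ)] with t hc1 hc2 ht0
        have hconvnn : 0 ≤ convK h₁ lA t := convK_nn hh₁.1 hA0 ht0
        have hf1nn : 0 ≤ μA + α * convK h₁ lA t :=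
          add_nonneg hμA (mul_nonneg hα0.le hconvnn)
        have hf1 : max (X - C1 * e) 0 ≤ μA + α * convK h₁ lA t := by
          apply max_le _ hf1nn
          have h1 : α * (max (a - e) 0 * l1 h₁ - e) ≤ α * convK h₁ lA t :=
            mul_le_mul_of_nonneg_left hc1 hα0.le
          have h2 : α * l1 h₁ * (a - e) ≤ α * l1 h₁ * max (a - e) 0 :=
            mul_le_mul_of_nonneg_left (le_max_left _ _) hκ10
          have h3 : α * e ≤ e := by linarith [mul_nonneg h1α.le he.le]
          rw [hX, hC1]
          linarith
        have harg20 : 0 ≤ (1 - α) * convK h₂ lB t :=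
          mul_nonneg h1α.le (convK_nn hh₂.1 hB0 ht0)
        have harg2 : (1 - α) * convK h₂ lB t ≤
            (1 - α) * l1 h₂ * b + ((1 - α) * l1 h₂ + 1) * e := by
          have h1 : (1 - α) * convK h₂ lB t ≤ (1 - α) * ((b + e) * l1 h₂ + e) :=
            mul_le_mul_of_nonneg_left hc2 h1α.le
          nlinarith
        have hf2 : max (Y - C2 * e) 0 ≤ ΦBA ((1 - α) * convK h₂ lB t) := by
          apply max_le _ (hBAbd _ harg20).1
          have h4 := lip_lb_anti hKBAlip hKBA0 hBAanti (mul_nonneg hκ20 hb0) harg20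
            (mul_nonneg (by linarith) he.le) harg2
          rw [hY, hC2]
          linarith
        have heq := heqA t ht0
        simp only at heq
        rw [heq]
        exact mul_le_mul hf1 hf2 (le_max_right _ _) hf1nn
      have h5 := eliminf_lb_ev hfinal
      rw [← ENNReal.ofReal_toReal hfinA.ne] at h5
      have h6 := (ENNReal.ofReal_le_ofReal_iff ENNReal.toReal_nonneg).1 h5
      rw [← ha] at h6
      rcases le_or_gt (X - C1 * e) 0 with h7 | h7
      · have hXY : X * Y ≤ X := mul_le_of_le_one_right hX0 hY01.2
        nlinarith [mul_nonneg (mul_nonneg hX0 hC20) he.le]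
      · rcases le_or_gt (Y - C2 * e) 0 with h8 | h8
        · have hXY : X * Y ≤ X * (C2 * e) :=
            mul_le_mul_of_nonneg_left (by linarith) hX0
          nlinarith [mul_pos hC10 he]
        · rw [max_eq_left h7.le, max_eq_left h8.le] at h6
          have hY1 : Y ≤ 1 := hY01.2
          have hc1e : 0 < C1 * e := mul_pos hC10 he
          have h9 : C1 * e * Y ≤ C1 * e := mul_le_of_le_one_right hc1e.le hY1
          have h10 : 0 ≤ C1 * C2 * e * e :=
            mul_nonneg (mul_nonneg (mul_nonneg hC10.le hC20) he.le) he.le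
          nlinarith
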